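/- Let u be analytic on ℂ₊ with |u(ζ)e^ζ| ≤ B·e^{|ζ|} for all ζ ∈ ℂ₊, sup over the line Re ζ = ε of |u(ζ)e^ζ| at most B·e^ε, and sup over [ε, ∞) of |u(ζ)e^ζ| at most A·e^{aγ/ε} for every ε > 0 (with A, B, a, γ fixed positive constants). Then sup over {Re ζ > 0} of |u(ζ)e^ζ| is at most B. -/

import Mathlib

open Filter Set Complex Topology Asymptotics

/-- Key Phragmén–Lindelöf step: if `u` is analytic on the right half-plane, `|u(ζ)e^ζ|` is
bounded by `B·e^{|ζ|}` on `{Re ζ > 0}`, by `B·e^ε` on each vertical line `Re ζ = ε`, and by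
`A·e^{aγ/ε}` on each real ray `[ε, ∞)`, then `|u(ζ)e^ζ| ≤ B` on all of `{Re ζ > 0}`. -/
theorem phragmen_lindelof_key_step
    (u : ℂ → ℂ) (A B a γ : ℝ)
    (hA : 0 < A) (hB : 0 < B) (ha : 0 < a) (hγ : 0 < γ)
    (hu : DifferentiableOn ℂ u {z : ℂ | 0 < z.re})
    (h1 : ∀ ζ : ℂ, 0 < ζ.re → ‖u ζ * Complex.exp ζ‖ ≤ B * Real.exp ‖ζ‖)
    (h2 : ∀ ε : ℝ, 0 < ε → ∀ ζ : ℂ, ζ.re = ε →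
      ‖u ζ * Complex.exp ζ‖ ≤ B * Real.exp ε)
    (h3 : ∀ ε : ℝ, 0 < ε → ∀ t : ℝ, ε ≤ t →
      ‖u t * Complex.exp t‖ ≤ A * Real.exp (a * γ / ε)) :
    ∀ ζ : ℂ, 0 < ζ.re → ‖u ζ * Complex.exp ζ‖ ≤ B := by
  -- Define `F w = u w * exp w`.
  set F : ℂ → ℂ := fun w => u w * Complex.exp w with hF
  have hFd : DifferentiableOn ℂ F {z : ℂ | 0 < z.re} :=
    hu.mul (Complex.differentiable_exp.differentiableOn)
  -- Key: for each ε > 0, `‖F z‖ ≤ B e^ε` on `{Re z ≥ ε}`.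
  have key : ∀ ε : ℝ, 0 < ε → ∀ z : ℂ, 0 ≤ z.re → ‖F (z + ε)‖ ≤ B * Real.exp ε := by
    intro ε hε z hz
    set g : ℂ → ℂ := fun w => F (w + ε) with hg
    have hmaps : ∀ w : ℂ, 0 ≤ w.re → 0 < (w + (ε : ℂ)).re := by
      intro w hw
      simp only [Complex.add_re, Complex.ofReal_re]
      linarith
    have hshift : Differentiable ℂ (fun w : ℂ => w + (ε : ℂ)) :=
      differentiable_id.add_const _
    have hd : DiffContOnCl ℂ g {w : ℂ | 0 < w.re} := by
      constructor
      · exact hFd.comp (hshift.differentiableOn) fun w hw => hmaps w (le_of_lt hw)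
      · have hcl : closure {w : ℂ | 0 < w.re} = {w : ℂ | 0 ≤ w.re} := by
          simpa using closure_setOf_lt_re 0
        rw [hcl]
        exact hFd.continuousOn.comp hshift.continuous.continuousOn fun w hw => hmaps w hw
    have hexp : ∃ c < (2 : ℝ), ∃ B',
        g =O[Bornology.cobounded ℂ ⊓ 𝓟 {w : ℂ | 0 < w.re}]
          fun w => Real.exp (B' * ‖w‖ ^ c) := by
      refine ⟨1, one_lt_two, 1, IsBigO.of_bound (B * Real.exp ε) ?_⟩
      refine eventually_inf_principal.2 <| Eventually.of_forall fun w hw => ?_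
      have h1' := h1 (w + ε) (hmaps w (le_of_lt hw))
      have hnorm : ‖(w : ℂ) + (ε : ℂ)‖ ≤ ‖w‖ + ε := by
        calc ‖(w : ℂ) + (ε : ℂ)‖ ≤ ‖w‖ + ‖(ε : ℂ)‖ := norm_add_le _ _
        _ = ‖w‖ + ε := by simp [abs_of_pos hε, Complex.norm_real]
      have : ‖g w‖ ≤ B * Real.exp (‖w‖ + ε) := h1'.trans (by gcongr)
      refine this.trans (le_of_eq ?_)
      rw [Real.norm_eq_abs, Real.abs_exp, Real.exp_add, one_mul, Real.rpow_one]
      ring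
    have hre : IsBoundedUnder (· ≤ ·) atTop fun x : ℝ => ‖g x‖ := by
      refine ⟨A * Real.exp (a * γ / ε), eventually_map.2 ?_⟩
      filter_upwards [eventually_ge_atTop (0 : ℝ)] with x hx
      have : ((x : ℂ) + (ε : ℂ)) = ((x + ε : ℝ) : ℂ) := by push_cast; ring
      simp only [hg, hF, this]
      exact h3 ε hε (x + ε) (by linarith)
    have him : ∀ y : ℝ, ‖g (y * I)‖ ≤ B * Real.exp ε := by
      intro y
      exact h2 ε hε _ (by simp)
    show ‖g z‖ ≤ B * Real.exp ε
    exact PhragmenLindelof.right_half_plane_of_bounded_on_real hd hexp hre him hz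
  -- Let ε → 0.
  intro ζ hζ
  have hev : ∀ᶠ ε : ℝ in 𝓝[>] (0 : ℝ), ‖F ζ‖ ≤ B * Real.exp ε := by
    filter_upwards [Ioo_mem_nhdsGT_of_mem (show (0:ℝ) ∈ Ico 0 ζ.re from ⟨le_rfl, hζ⟩)]
      with ε hε
    have := key ε hε.1 (ζ - ε) (by simp [Complex.sub_re]; linarith [hε.2])
    simpa using this
  have htend : Tendsto (fun ε : ℝ => B * Real.exp ε) (𝓝[>] (0 : ℝ)) (𝓝 B) := by
    have : Tendsto (fun ε : ℝ => B * Real.exp ε) (𝓝 (0 : ℝ)) (𝓝 (B * Real.exp 0)) :=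
      (Real.continuous_exp.continuousAt.tendsto.const_mul B)
    simpa using this.mono_left nhdsWithin_le_nhds
  exact ge_of_tendsto htend hev
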